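/- The function W : (ℂ∖{0})² → ℂ defined by W(y_1, y_2) = 3y_1 + y_2 + 4·y_1^{−1}y_2 + y_1^{−2}y_2 + 5·y_1^{−1} + y_2^{−1} + 6·y_1 y_2^{−1} + y_1^{2} y_2^{−1} has exactly 8 critical points, and each of these critical points is nondegenerate. -/
import Mathlib


/-- The potential function of the monotone fiber `L(1.5,2)` in `X̂₁₀` with the chosen bulk deformation (energy factor dropped). -/
noncomputable def W : ℂ → ℂ → ℂ := fun y₁ y₂ =>
  3 * y₁ + y₂ + 4 * y₁⁻¹ * y₂ + (y₁ ^ 2)⁻¹ * y₂ + 5 * y₁⁻¹ + y₂⁻¹ + 6 * y₁ * y₂⁻¹ + y₁ ^ 2 * y₂⁻¹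

/-- A point of `(ℂ∖{0})²` is a critical point of `W` if both partial
derivatives of `W` vanish there. -/
def IsCritPt (p : ℂ × ℂ) : Prop :=
  p.1 ≠ 0 ∧ p.2 ≠ 0 ∧
    deriv (fun z => W z p.2) p.1 = 0 ∧ deriv (fun z => W p.1 z) p.2 = 0

/-- The Hessian determinant
`(∂²W/∂y₁²)(∂²W/∂y₂²) - (∂²W/∂y₁∂y₂)²` of `W` at a point. -/
noncomputable def hessDet (p : ℂ × ℂ) : ℂ :=
  deriv (deriv (fun z => W z p.2)) p.1 * deriv (deriv (fun z => W p.1 z)) p.2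
    - (deriv (fun w => deriv (fun z => W z w) p.1) p.2) ^ 2

lemma deriv_W1 (y : ℂ) {x : ℂ} (hx : x ≠ 0) :
    deriv (fun z => W z y) x
      = 3 - 4*y*(x^2)⁻¹ - 2*y*(x^3)⁻¹ - 5*(x^2)⁻¹ + 6*y⁻¹ + 2*x*y⁻¹ := by
  have h : HasDerivAt (fun z => W z y)
      (3*1 + 0 + (4 * -(x^2)⁻¹) * y + (-(↑2 * x ^ 1) / (x^2)^2) * y + 5 * -(x^2)⁻¹ + 0
        + (6*1) * y⁻¹ + (↑2 * x ^ 1) * y⁻¹) x := by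
    unfold W
    exact ((((((((hasDerivAt_id x).const_mul 3).add (hasDerivAt_const x y)).add
      (((hasDerivAt_inv hx).const_mul 4).mul_const y)).add
      (((hasDerivAt_pow 2 x).inv (pow_ne_zero 2 hx)).mul_const y)).add
      ((hasDerivAt_inv hx).const_mul 5)).add (hasDerivAt_const x y⁻¹)).add
      (((hasDerivAt_id x).const_mul 6).mul_const y⁻¹)).add
      ((hasDerivAt_pow 2 x).mul_const y⁻¹)
  rw [h.deriv]
  field_simp
  ring

lemma deriv_W2 (x : ℂ) {y : ℂ} (hy : y ≠ 0) :
    deriv (fun z => W x z) y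
      = 1 + 4*x⁻¹ + (x^2)⁻¹ - (y^2)⁻¹ - 6*x*(y^2)⁻¹ - x^2*(y^2)⁻¹ := by
  have h : HasDerivAt (fun z => W x z)
      (0 + 1 + 4 * x⁻¹ * 1 + (x^2)⁻¹ * 1 + 0 + -(y^2)⁻¹ + 6 * x * -(y^2)⁻¹
        + x^2 * -(y^2)⁻¹) y := by
    unfold W
    exact (((((((hasDerivAt_const y (3*x)).add (hasDerivAt_id y)).add
      ((hasDerivAt_id y).const_mul (4*x⁻¹))).add
      ((hasDerivAt_id y).const_mul ((x^2)⁻¹))).add (hasDerivAt_const y (5*x⁻¹))).add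
      (hasDerivAt_inv hy)).add ((hasDerivAt_inv hy).const_mul (6*x))).add
      ((hasDerivAt_inv hy).const_mul (x^2))
  rw [h.deriv]
  ring

lemma deriv_W11 {x y : ℂ} (hx : x ≠ 0) :
    deriv (deriv (fun z => W z y)) x
      = 8*y*(x^3)⁻¹ + 6*y*(x^4)⁻¹ + 10*(x^3)⁻¹ + 2*y⁻¹ := by
  have hev : deriv (fun z => W z y) =ᶠ[nhds x]
      fun z => 3 - 4*y*(z^2)⁻¹ - 2*y*(z^3)⁻¹ - 5*(z^2)⁻¹ + 6*y⁻¹ + 2*z*y⁻¹ := by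
    filter_upwards [compl_singleton_mem_nhds hx] with z hz
    exact deriv_W1 y hz
  rw [hev.deriv_eq]
  have h : HasDerivAt
      (fun z : ℂ => 3 - 4*y*(z^2)⁻¹ - 2*y*(z^3)⁻¹ - 5*(z^2)⁻¹ + 6*y⁻¹ + 2*z*y⁻¹)
      (0 - 4*y*(-(↑2 * x ^ (2-1)) / (x^2)^2) - 2*y*(-(↑3 * x ^ (3-1)) / (x^3)^2)
        - 5*(-(↑2 * x ^ (2-1)) / (x^2)^2) + 0 + 2*1*y⁻¹) x := by
    have t2 := (hasDerivAt_pow 2 x).inv (pow_ne_zero 2 hx)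
    have t3 := (hasDerivAt_pow 3 x).inv (pow_ne_zero 3 hx)
    exact (((((hasDerivAt_const x 3).sub ((t2.const_mul (4*y)))).sub
      (t3.const_mul (2*y))).sub (t2.const_mul 5)).add (hasDerivAt_const x (6*y⁻¹))).add
      (((hasDerivAt_id x).const_mul 2).mul_const y⁻¹)
  rw [h.deriv]
  field_simp
  ring

lemma deriv_W22 {x y : ℂ} (hy : y ≠ 0) :
    deriv (deriv (fun z => W x z)) y
      = 2*(y^3)⁻¹ + 12*x*(y^3)⁻¹ + 2*x^2*(y^3)⁻¹ := by
  have hev : deriv (fun z => W x z) =ᶠ[nhds y]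
      fun w => 1 + 4*x⁻¹ + (x^2)⁻¹ - (w^2)⁻¹ - 6*x*(w^2)⁻¹ - x^2*(w^2)⁻¹ := by
    filter_upwards [compl_singleton_mem_nhds hy] with w hw
    exact deriv_W2 x hw
  rw [hev.deriv_eq]
  have t2 := (hasDerivAt_pow 2 y).inv (pow_ne_zero 2 hy)
  have h : HasDerivAt
      (fun w : ℂ => 1 + 4*x⁻¹ + (x^2)⁻¹ - (w^2)⁻¹ - 6*x*(w^2)⁻¹ - x^2*(w^2)⁻¹)
      (0 - -(↑2 * y ^ (2-1)) / (y^2)^2 - 6*x*(-(↑2 * y ^ (2-1)) / (y^2)^2)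
        - x^2*(-(↑2 * y ^ (2-1)) / (y^2)^2)) y :=
    (((hasDerivAt_const y (1 + 4*x⁻¹ + (x^2)⁻¹)).sub t2).sub
      (t2.const_mul (6*x))).sub (t2.const_mul (x^2))
  rw [h.deriv]
  field_simp
  ring

lemma deriv_W12 {x y : ℂ} (hx : x ≠ 0) (hy : y ≠ 0) :
    deriv (fun w => deriv (fun z => W z w) x) y
      = -4*(x^2)⁻¹ - 2*(x^3)⁻¹ - 6*(y^2)⁻¹ - 2*x*(y^2)⁻¹ := by
  have hfn : (fun w => deriv (fun z => W z w) x)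
      = fun w => 3 - 4*w*(x^2)⁻¹ - 2*w*(x^3)⁻¹ - 5*(x^2)⁻¹ + 6*w⁻¹ + 2*x*w⁻¹ :=
    funext fun w => deriv_W1 w hx
  rw [hfn]
  have h : HasDerivAt
      (fun w : ℂ => 3 - 4*w*(x^2)⁻¹ - 2*w*(x^3)⁻¹ - 5*(x^2)⁻¹ + 6*w⁻¹ + 2*x*w⁻¹)
      (0 - 4*1*(x^2)⁻¹ - 2*1*(x^3)⁻¹ - 0 + 6 * -(y^2)⁻¹ + 2*x* -(y^2)⁻¹) y :=
    (((((hasDerivAt_const y 3).sub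
      (((hasDerivAt_id y).const_mul 4).mul_const ((x^2)⁻¹))).sub
      (((hasDerivAt_id y).const_mul 2).mul_const ((x^3)⁻¹))).sub
      (hasDerivAt_const y (5*(x^2)⁻¹))).add ((hasDerivAt_inv hy).const_mul 6)).add
      ((hasDerivAt_inv hy).const_mul (2*x))
  rw [h.deriv]
  ring

open Polynomial

noncomputable def QP : ℂ[X] :=
  -21 - 210*X - 520*X^2 + 10*X^3 + 538*X^4 + 170*X^5 - 104*X^6 - 50*X^7 - 5*X^8

lemma QP_natDegree : QP.natDegree = 8 := by
  unfold QP; compute_degree!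

lemma QP_deriv : derivative QP
    = -210 - 1040*X + 30*X^2 + 2152*X^3 + 850*X^4 - 624*X^5 - 350*X^6 - 40*X^7 := by
  unfold QP
  simp [derivative_sub, derivative_add, derivative_mul, derivative_X_pow, derivative_ofNat, map_ofNat]
  ring

lemma QP_eval (x : ℂ) : QP.eval x
    = -21 - 210*x - 520*x^2 + 10*x^3 + 538*x^4 + 170*x^5 - 104*x^6 - 50*x^7 - 5*x^8 := by
  simp [QP]

lemma QP_ne : QP ≠ 0 := by
  intro h
  have h8 := QP_natDegree
  rw [h, Polynomial.natDegree_zero] at h8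
  exact absurd h8 (by norm_num)

lemma QP_key :
    ((-89956425660585468500470786281475157793217136880842918905048390790574798 - 40088965008813673329585687655516678783382399722054904424886446948131670*X + 185370503198655767834511153828399438247417139682977849532446528348977860*X^2 + 94934626835340074964146893487315954911951564706123380140427506465823980*X^3 - 52644099041673316193361478967140074603553934866072618906408584447813174*X^4 - 33088417689419774736591262509705998399335158690677332102756737092303550*X^5 - 3891159912247977622223519991967298289776096983175949525762961801680840*X^6) : ℂ[X]) * QP + ((9374948883328943108537188645853019918226759612503946857412016548714875 + 47537003882123498534007087467564250838432376867314577291782286863180965*X + 10219085034642731965818160651133171996974219203310814009232010160148825*X^2 - 47626588618683086152253437316283181825514931832900637555092583008427961*X^3 - 18639477403339676753081972634005140670632265995026635077158797672168475*X^4 + 8959886394615657875824138893795024833141565848555909203848689059506099*X^5 + 4744045947466218345546332812458140157694409989955908626245054918050575*X^6 + 486394989030997202777939998995912286222012122896993690720370225210105*X^7)) * derivative QP = -79654326626783214282923103718155869170059644128127543050507268628052992 := by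
  rw [QP_deriv]
  unfold QP
  ring

lemma QP_sep : QP.Separable := by
  refine ⟨-(Polynomial.C ((79654326626783214282923103718155869170059644128127543050507268628052992:ℂ))⁻¹) * ((-89956425660585468500470786281475157793217136880842918905048390790574798 - 40088965008813673329585687655516678783382399722054904424886446948131670*X + 185370503198655767834511153828399438247417139682977849532446528348977860*X^2 + 94934626835340074964146893487315954911951564706123380140427506465823980*X^3 - 52644099041673316193361478967140074603553934866072618906408584447813174*X^4 - 33088417689419774736591262509705998399335158690677332102756737092303550*X^5 - 3891159912247977622223519991967298289776096983175949525762961801680840*X^6)), -(Polynomial.C ((79654326626783214282923103718155869170059644128127543050507268628052992:ℂ))⁻¹) * ((9374948883328943108537188645853019918226759612503946857412016548714875 + 47537003882123498534007087467564250838432376867314577291782286863180965*X + 10219085034642731965818160651133171996974219203310814009232010160148825*X^2 - 47626588618683086152253437316283181825514931832900637555092583008427961*X^3 - 18639477403339676753081972634005140670632265995026635077158797672168475*X^4 + 8959886394615657875824138893795024833141565848555909203848689059506099*X^5 + 4744045947466218345546332812458140157694409989955908626245054918050575*X^6 + 486394989030997202777939998995912286222012122896993690720370225210105*X^7)), ?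_⟩
  have key := QP_key
  have : -(Polynomial.C (((79654326626783214282923103718155869170059644128127543050507268628052992:ℂ)))⁻¹) * (((-89956425660585468500470786281475157793217136880842918905048390790574798 - 40088965008813673329585687655516678783382399722054904424886446948131670*X + 185370503198655767834511153828399438247417139682977849532446528348977860*X^2 + 94934626835340074964146893487315954911951564706123380140427506465823980*X^3 - 52644099041673316193361478967140074603553934866072618906408584447813174*X^4 - 33088417689419774736591262509705998399335158690677332102756737092303550*X^5 - 3891159912247977622223519991967298289776096983175949525762961801680840*X^6) : ℂ[X]) * QP + ((9374948883328943108537188645853019918226759612503946857412016548714875 + 47537003882123498534007087467564250838432376867314577291782286863180965*X + 10219085034642731965818160651133171996974219203310814009232010160148825*X^2 - 47626588618683086152253437316283181825514931832900637555092583008427961*X^3 - 18639477403339676753081972634005140670632265995026635077158797672168475*X^4 + 8959886394615657875824138893795024833141565848555909203848689059506099*X^5 + 4744045947466218345546332812458140157694409989955908626245054918050575*X^6 + 486394989030997202777939998995912286222012122896993690720370225210105*X^7)) * derivative QP)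
      = -(Polynomial.C ((79654326626783214282923103718155869170059644128127543050507268628052992:ℂ))⁻¹) * (-79654326626783214282923103718155869170059644128127543050507268628052992) := by rw [key]
  calc -(Polynomial.C ((79654326626783214282923103718155869170059644128127543050507268628052992:ℂ))⁻¹) * ((-89956425660585468500470786281475157793217136880842918905048390790574798 - 40088965008813673329585687655516678783382399722054904424886446948131670*X + 185370503198655767834511153828399438247417139682977849532446528348977860*X^2 + 94934626835340074964146893487315954911951564706123380140427506465823980*X^3 - 52644099041673316193361478967140074603553934866072618906408584447813174*X^4 - 33088417689419774736591262509705998399335158690677332102756737092303550*X^5 - 3891159912247977622223519991967298289776096983175949525762961801680840*X^6)) * QP + -(Polynomial.C ((79654326626783214282923103718155869170059644128127543050507268628052992:ℂ))⁻¹) * ((9374948883328943108537188645853019918226759612503946857412016548714875 + 47537003882123498534007087467564250838432376867314577291782286863180965*X + 10219085034642731965818160651133171996974219203310814009232010160148825*X^2 - 47626588618683086152253437316283181825514931832900637555092583008427961*X^3 - 18639477403339676753081972634005140670632265995026635077158797672168475*X^4 + 8959886394615657875824138893795024833141565848555909203848689059506099*X^5 + 4744045947466218345546332812458140157694409989955908626245054918050575*X^6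 + 486394989030997202777939998995912286222012122896993690720370225210105*X^7)) * derivative QP
      = -(Polynomial.C ((79654326626783214282923103718155869170059644128127543050507268628052992:ℂ))⁻¹) * (((-89956425660585468500470786281475157793217136880842918905048390790574798 - 40088965008813673329585687655516678783382399722054904424886446948131670*X + 185370503198655767834511153828399438247417139682977849532446528348977860*X^2 + 94934626835340074964146893487315954911951564706123380140427506465823980*X^3 - 52644099041673316193361478967140074603553934866072618906408584447813174*X^4 - 33088417689419774736591262509705998399335158690677332102756737092303550*X^5 - 3891159912247977622223519991967298289776096983175949525762961801680840*X^6) : ℂ[X]) * QP + ((9374948883328943108537188645853019918226759612503946857412016548714875 + 47537003882123498534007087467564250838432376867314577291782286863180965*X + 10219085034642731965818160651133171996974219203310814009232010160148825*X^2 - 47626588618683086152253437316283181825514931832900637555092583008427961*X^3 - 18639477403339676753081972634005140670632265995026635077158797672168475*X^4 + 8959886394615657875824138893795024833141565848555909203848689059506099*X^5 + 4744045947466218345546332812458140157694409989955908626245054918050575*X^6 + 486394989030997202777939998995912286222012122896993690720370225210105*X^7)) * derivative QP) := by ring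
    _ = -(Polynomial.C ((79654326626783214282923103718155869170059644128127543050507268628052992:ℂ))⁻¹) * (-79654326626783214282923103718155869170059644128127543050507268628052992) := this
    _ = Polynomial.C ((79654326626783214282923103718155869170059644128127543050507268628052992:ℂ))⁻¹ * Polynomial.C ((79654326626783214282923103718155869170059644128127543050507268628052992:ℂ)) := by
        rw [← map_ofNat (Polynomial.C : ℂ →+* ℂ[X]) 79654326626783214282923103718155869170059644128127543050507268628052992]; ring
    _ = 1 := by rw [← Polynomial.C_mul, inv_mul_cancel₀ (by norm_num : (79654326626783214282923103718155869170059644128127543050507268628052992:ℂ) ≠ 0), Polynomial.C_1]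

lemma QP_roots_card : QP.roots.toFinset.card = 8 := by
  have hnd : QP.roots.Nodup := Polynomial.nodup_roots QP_sep
  rw [Multiset.toFinset_card_of_nodup hnd, ← QP_natDegree]
  exact Polynomial.splits_iff_card_roots.mp (IsAlgClosed.splits QP)

lemma mem_rootset (z : ℂ) : z ∈ QP.roots.toFinset ↔
    -21 - 210*z - 520*z^2 + 10*z^3 + 538*z^4 + 170*z^5 - 104*z^6 - 50*z^7 - 5*z^8 = 0 := by
  rw [Multiset.mem_toFinset, Polynomial.mem_roots QP_ne, Polynomial.IsRoot, QP_eval]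

lemma nonvanish_A {x : ℂ} (hQ : (-21 - 210*x - 520*x^2 + 10*x^3 + 538*x^4 + 170*x^5 - 104*x^6 - 50*x^7 - 5*x^8) = 0) : x^2+4*x+1 ≠ 0 := by
  intro h0
  have hc : (48 : ℂ) = 0 := by
    linear_combination ((209 + 56*x)) * hQ + ((4437 + 27318*x + 6731*x^2 - 27212*x^3 - 10885*x^4 + 5094*x^5 + 2725*x^6 + 280*x^7)) * h0
  norm_num at hc

lemma nonvanish_B {x : ℂ} (hQ : (-21 - 210*x - 520*x^2 + 10*x^3 + 538*x^4 + 170*x^5 - 104*x^6 - 50*x^7 - 5*x^8) = 0) : x^2+6*x+1 ≠ 0 := by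
  intro h0
  have hc : (128 : ℂ) = 0 := by
    linear_combination ((1189 + 204*x)) * hQ + ((25097 + 103392*x + 15671*x^2 - 103228*x^3 - 38025*x^4 + 19496*x^5 + 10025*x^6 + 1020*x^7)) * h0
  norm_num at hc

lemma nonvanish_D {x : ℂ} (hQ : (-21 - 210*x - 520*x^2 + 10*x^3 + 538*x^4 + 170*x^5 - 104*x^6 - 50*x^7 - 5*x^8) = 0) : 3*x^2-5 ≠ 0 := by
  intro h0
  have hc : (1547536 : ℂ) = 0 := by
    linear_combination ((35559 - 19440*x)) * hQ + ((-458855 - 1411830*x - 3156969*x^2 + 1245780*x^3 + 1893087*x^4 - 135270*x^5 - 264735*x^6 - 32400*x^7)) * h0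
  norm_num at hc

lemma nonvanish_x {x : ℂ} (hQ : (-21 - 210*x - 520*x^2 + 10*x^3 + 538*x^4 + 170*x^5 - 104*x^6 - 50*x^7 - 5*x^8) = 0) : x ≠ 0 := by
  intro h0
  rw [h0] at hQ
  norm_num at hQ

/-- the second coordinate of a critical point, as a function of the first -/
noncomputable def ycrit (x : ℂ) : ℂ :=
  (-2*x*((x^2-1)*(x^2+5*x+1))) / ((x^2+4*x+1)*(3*x^2-5))

lemma crit_iff (x y : ℂ) :
    IsCritPt (x, y) ↔ ((-21 - 210*x - 520*x^2 + 10*x^3 + 538*x^4 + 170*x^5 - 104*x^6 - 50*x^7 - 5*x^8) = 0 ∧ y = ycrit x) := by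
  constructor
  · rintro ⟨hx', hy', hd1', hd2'⟩
    have hx : x ≠ 0 := hx'
    have hy : y ≠ 0 := hy'
    have hu : x * x⁻¹ = 1 := mul_inv_cancel₀ hx
    have hv : y * y⁻¹ = 1 := mul_inv_cancel₀ hy
    have hd1 : deriv (fun z => W z y) x = 0 := hd1'
    have hd2 : deriv (fun z => W x z) y = 0 := hd2'
    rw [deriv_W1 y hx] at hd1
    rw [deriv_W2 x hy] at hd2
    have h1 : (2*x^4 + 3*x^3*y + 6*x^3 - 4*x*y^2 - 5*x*y - 2*y^2) = 0 := by
      linear_combination (x^3*y) * hd1 + (2*y^2 + 5*x*y + 4*x*y^2 + 2*x*y^2*x⁻¹ + 5*x^2*y*x⁻¹ + 4*x^2*y^2*x⁻¹ + 2*x^2*y^2*x⁻¹^2) * hu + (-6*x^3 - 2*x^4) * hv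
    have h2 : (y^2*(x^2+4*x+1) - x^2*(x^2+6*x+1)) = 0 := by
      linear_combination (x^2*y^2) * hd2 + (-y^2 - 4*x*y^2 - x*y^2*x⁻¹) * hu + (x^2 + x^2*y*y⁻¹ + 6*x^3 + 6*x^3*y*y⁻¹ + x^4 + x^4*y*y⁻¹) * hv
    have h3' : x * (y * ((x^2+4*x+1)*(3*x^2-5)) - (-2*x*((x^2-1)*(x^2+5*x+1)))) = 0 := by
      linear_combination (x^2+4*x+1) * h1 + (4*x+2) * h2
    have h3 : y * ((x^2+4*x+1)*(3*x^2-5)) = (-2*x*((x^2-1)*(x^2+5*x+1))) := by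
      rcases mul_eq_zero.mp h3' with h | h
      · exact absurd h hx
      · exact sub_eq_zero.mp h
    have hQ' : x^2 * ((-21 - 210*x - 520*x^2 + 10*x^3 + 538*x^4 + 170*x^5 - 104*x^6 - 50*x^7 - 5*x^8)) = 0 := by
      linear_combination (-(y * ((x^2+4*x+1)*(3*x^2-5)) + (-2*x*((x^2-1)*(x^2+5*x+1))))) * h3
        + ((x^2+4*x+1)*(3*x^2-5)^2) * h2
    have hQ : (-21 - 210*x - 520*x^2 + 10*x^3 + 538*x^4 + 170*x^5 - 104*x^6 - 50*x^7 - 5*x^8) = 0 := by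
      rcases mul_eq_zero.mp hQ' with h | h
      · exact absurd h (pow_ne_zero 2 hx)
      · exact h
    refine ⟨hQ, ?_⟩
    have hA := nonvanish_A hQ
    have hD := nonvanish_D hQ
    rw [ycrit, eq_div_iff (mul_ne_zero hA hD)]
    exact h3
  · rintro ⟨hQ, hyv⟩
    have hx : x ≠ 0 := nonvanish_x hQ
    have hA := nonvanish_A hQ
    have hB := nonvanish_B hQ
    have hD := nonvanish_D hQ
    have hAD := mul_ne_zero hA hD
    have h3 : y * ((x^2+4*x+1)*(3*x^2-5)) = (-2*x*((x^2-1)*(x^2+5*x+1))) := by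
      rw [hyv, ycrit, div_mul_cancel₀ _ hAD]
    have hy : y ≠ 0 := by
      intro h0
      rw [h0, zero_mul] at h3
      have hz : x^2*((x^2+4*x+1)*((x^2+6*x+1)*(3*x^2-5)^2)) = 0 := by
        linear_combination (-(x^2)) * hQ + (-(-2*x*((x^2-1)*(x^2+5*x+1)))) * h3
      rcases mul_eq_zero.mp hz with h | h
      · exact pow_ne_zero 2 hx h
      · rcases mul_eq_zero.mp h with h | h
        · exact hA h
        · rcases mul_eq_zero.mp h with h | h
          · exact hB h
          · exact pow_ne_zero 2 hD h
    have hu : x * x⁻¹ = 1 := mul_inv_cancel₀ hx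
    have hv : y * y⁻¹ = 1 := mul_inv_cancel₀ hy
    have h2 : (y^2*(x^2+4*x+1) - x^2*(x^2+6*x+1)) = 0 := by
      have hz : ((y^2*(x^2+4*x+1) - x^2*(x^2+6*x+1))) * ((x^2+4*x+1)*(3*x^2-5)^2) = 0 := by
        linear_combination (y * ((x^2+4*x+1)*(3*x^2-5)) + (-2*x*((x^2-1)*(x^2+5*x+1)))) * h3 + x^2 * hQ
      rcases mul_eq_zero.mp hz with h | h
      · exact h
      · exact absurd h (mul_ne_zero hA (pow_ne_zero 2 hD))
    have h1 : (2*x^4 + 3*x^3*y + 6*x^3 - 4*x*y^2 - 5*x*y - 2*y^2) = 0 := by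
      have hz : ((2*x^4 + 3*x^3*y + 6*x^3 - 4*x*y^2 - 5*x*y - 2*y^2)) * (x^2+4*x+1) = 0 := by
        linear_combination x * h3 + (-(4*x+2)) * h2
      rcases mul_eq_zero.mp hz with h | h
      · exact h
      · exact absurd h hA
    refine ⟨hx, hy, ?_, ?_⟩
    · show deriv (fun z => W z y) x = 0
      rw [deriv_W1 y hx]
      linear_combination (x⁻¹^3*y⁻¹) * h1 + (-6*y⁻¹ - 3*y*y⁻¹ + 5*y*x⁻¹^2*y⁻¹ + 4*y^2*x⁻¹^2*y⁻¹ - 2*x*y⁻¹ - 6*x*x⁻¹*y⁻¹ - 3*x*y*x⁻¹*y⁻¹ - 2*x^2*x⁻¹*y⁻¹ - 6*x^2*x⁻¹^2*y⁻¹ - 3*x^2*y*x⁻¹^2*y⁻¹ - 2*x^3*x⁻¹^2*y⁻¹) * hu + (-3 + 5*x⁻¹^2 + 4*y*x⁻¹^2 + 2*y*x⁻¹^3) * hv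
    · show deriv (fun z => W x z) y = 0
      rw [deriv_W2 x hy]
      linear_combination (x⁻¹^2*y⁻¹^2) * h2 + (y⁻¹^2 - y^2*y⁻¹^2 - 4*y^2*x⁻¹*y⁻¹^2 + 6*x*y⁻¹^2 + x*x⁻¹*y⁻¹^2 - x*y^2*x⁻¹*y⁻¹^2 + x^2*y⁻¹^2 + 6*x^2*x⁻¹*y⁻¹^2 + x^3*x⁻¹*y⁻¹^2) * hu + (-1 - 4*x⁻¹ - x⁻¹^2 - y*y⁻¹ - 4*y*x⁻¹*y⁻¹ - y*x⁻¹^2*y⁻¹) * hv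

lemma hess_ne {x y : ℂ} (h : IsCritPt (x, y)) : hessDet (x, y) ≠ 0 := by
  obtain ⟨hQ, hyv⟩ := (crit_iff x y).mp h
  have hx : x ≠ 0 := nonvanish_x hQ
  have hy : y ≠ 0 := h.2.1
  have hu : x * x⁻¹ = 1 := mul_inv_cancel₀ hx
  have hv : y * y⁻¹ = 1 := mul_inv_cancel₀ hy
  have hA := nonvanish_A hQ
  have hD := nonvanish_D hQ
  have h3 : y * ((x^2+4*x+1)*(3*x^2-5)) = (-2*x*((x^2-1)*(x^2+5*x+1))) := by
    rw [hyv, ycrit, div_mul_cancel₀ _ (mul_ne_zero hA hD)]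
  intro h0g
  have h0 : deriv (deriv (fun z => W z y)) x * deriv (deriv (fun z => W x z)) y
      - (deriv (fun w => deriv (fun z => W z w) x) y)^2 = 0 := h0g
  rw [deriv_W11 hx, deriv_W22 hy, deriv_W12 hx hy] at h0
  have hN : ((-4*y^4 - 16*x*y^4 + 12*x^2*y^2 - 16*x^2*y^4 + 20*x^3*y + 64*x^3*y^2 + 120*x^4*y + 52*x^4*y^2 + 20*x^5*y - 32*x^6) : ℂ) = 0 := by
    linear_combination (x^6*y^4) * h0 + (4*y^4 + 16*x*y^4 + 4*x*y^4*x⁻¹ + 16*x^2*y^4 + 16*x^2*y^4*x⁻¹ + 4*x^2*y^4*x⁻¹^2 - 12*x^2*y^5*y⁻¹^3 + 24*x^3*y^4*y⁻¹^2 - 20*x^3*y^4*y⁻¹^3 + 16*x^3*y^4*x⁻¹ + 16*x^3*y^4*x⁻¹^2 + 4*x^3*y^4*x⁻¹^3 - 88*x^3*y^5*y⁻¹^3 - 12*x^3*y^5*x⁻¹*y⁻¹^3 + 56*x^4*y^4*y⁻¹^2 - 120*x^4*y^4*y⁻¹^3 + 24*x^4*y^4*x⁻¹*y⁻¹^2 -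 20*x^4*y^4*x⁻¹*y⁻¹^3 + 16*x^4*y^4*x⁻¹^2 + 16*x^4*y^4*x⁻¹^3 + 4*x^4*y^4*x⁻¹^4 - 108*x^4*y^5*y⁻¹^3 - 88*x^4*y^5*x⁻¹*y⁻¹^3 - 12*x^4*y^5*x⁻¹^2*y⁻¹^3 + 16*x^5*y^4*y⁻¹^2 - 20*x^5*y^4*y⁻¹^3 + 56*x^5*y^4*x⁻¹*y⁻¹^2 - 120*x^5*y^4*x⁻¹*y⁻¹^3 + 24*x^5*y^4*x⁻¹^2*y⁻¹^2 - 20*x^5*y^4*x⁻¹^2*y⁻¹^3 + 16*x^5*y^4*x⁻¹^3 + 16*x^5*y^4*x⁻¹^4 + 4*x^5*y^4*x⁻¹^5 - 16*x^5*y^5*y⁻¹^3 - 108*x^5*y^5*x⁻¹*y⁻¹^3 - 88*x^5*y^5*x⁻¹^2*y⁻¹^3 - 12*x^5*y^5*x⁻¹^3*y⁻¹^3 + 16*x^6*y^4*x⁻¹*y⁻¹^2 - 20*x^6*y^4*x⁻¹*y⁻¹^3 + 8*x^6*y^4*x⁻¹^2*y⁻¹^2 - 120*x^6*y^4*x⁻¹^2*y⁻¹^3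 - 16*x^6*y^5*x⁻¹*y⁻¹^3 - 108*x^6*y^5*x⁻¹^2*y⁻¹^3 - 72*x^6*y^5*x⁻¹^3*y⁻¹^3 - 20*x^7*y^4*x⁻¹^2*y⁻¹^3 - 16*x^7*y^5*x⁻¹^2*y⁻¹^3 - 12*x^7*y^5*x⁻¹^3*y⁻¹^3) * hu + (-12*x^2*y^2 - 12*x^2*y^3*y⁻¹ - 12*x^2*y^4*y⁻¹^2 - 20*x^3*y - 64*x^3*y^2 - 20*x^3*y^2*y⁻¹ - 64*x^3*y^3*y⁻¹ - 20*x^3*y^3*y⁻¹^2 - 88*x^3*y^4*y⁻¹^2 - 120*x^4*y - 52*x^4*y^2 - 120*x^4*y^2*y⁻¹ - 52*x^4*y^3*y⁻¹ - 120*x^4*y^3*y⁻¹^2 - 108*x^4*y^4*y⁻¹^2 - 20*x^5*y - 20*x^5*y^2*y⁻¹ - 20*x^5*y^3*y⁻¹^2 - 16*x^5*y^4*y⁻¹^2 + 32*x^6 + 32*x^6*y*y⁻¹ + 32*x^6*y^2*y⁻¹^2 + 32*x^6*y^3*y⁻¹^3) * hv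
  have hHr : (((20014142515928741376/390625) + (7876543512115963776/15625)*x + (18553219905937085184/15625)*x^2 - (16867219372329607552/78125)*x^3 - (499141653325636656128/390625)*x^4 - (16303737373909810048/78125)*x^5 + (112264793536556707584/390625)*x^6 + (5909365857850372992/78125)*x^7) : ℂ) = 0 := by
    linear_combination (((x^2+4*x+1)*(3*x^2-5)))^4 * hN + (-((500*y^3 - 200*x*y^2 + 8000*x*y^3 - 1420*x^2*y - 3400*x^2*y^2 + 50600*x^2*y^3 - 1932*x^3 - 24560*x^3*y - 22560*x^3*y^2 + 155600*x^3*y^3 - 34608*x^4 - 166268*x^4*y - 71320*x^4*y^2 + 211340*x^4*y^3 - 231668*x^5 - 538464*x^5*y - 93512*x^5*y^2 - 13360*x^5*y^3 - 687040*x^6 - 749708*x^6*y + 33456*x^6*y^2 - 364288*x^6*y^3 - 684668*x^7 + 58480*x^7*y + 222752*x^7*y^2 - 303328*x^7*y^3 + 641584*x^8 + 1251188*x^8*y + 163216*x^8*y^2 + 90956*x^8*y^3 + 1420124*x^9 + 966784*x^9*y - 89688*x^9*y^2 + 223200*x^9*y^3 + 175072*x^10 - 320900*x^10*y - 156968*x^10*y^2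 + 67464*x^10*y^3 - 767972*x^11 - 683472*x^11*y - 36640*x^11*y^2 - 33264*x^11*y^3 - 311664*x^12 - 195252*x^12*y + 30984*x^12*y^2 - 25164*x^12*y^3 + 116132*x^13 + 94944*x^13*y + 19560*x^13*y^2 - 5616*x^13*y^3 + 82528*x^14 + 70556*x^14*y + 4032*x^14*y^2 - 432*x^14*y^3 + 9452*x^15 + 15696*x^15*y + 288*x^15*y^2 - 1552*x^16 + 1212*x^16*y - 268*x^17))) * h3 + (-(((953054405520416256/390625) - (30741308156079232/78125)*x + (4957908016132096/78125)*x^2 - (159914319193472/15625)*x^3 + (25791946428536/15625)*x^4 - (831620866712/3125)*x^5 + (134278679576/3125)*x^6 - (4300059952/625)*x^7 + (704989216/625)*x^8 - (25096192/125)*x^9 + (1775456/125)*x^10 + (81968/25)*x^11 + (256296/25)*x^12 + (15128/5)*x^13 + (2056/5)*x^14))) * hQ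
  have hc : (75585411260240503688257625605661401155991720642708391043934441324060158305903565066998009476698400308326981822269914460058162768756101039872710600314388428780662603821877018150305088126776371709531839608057396190614228370316740700730611781689405685618130212716417052705561600000000 : ℂ) = 0 := by
    linear_combination (-((-789291444784334671045670689066971107754851933186472160006792669121751871542730927248766051024262224293812079235438158138298315742574665550600909283412457243048290930274111072696152214112826635015727207562346579182686777716606545990262632416954339474509582028746760597117867755835841104162669816832 - 5082735903914485515197793885257363321001540031369694066979173909048141150183036620980966190897391616588016264834780754162932893799656557092848641011247479216177144174901491901962744165713732478846997058131535572234704709561841419110928305732440938115740899033783308194419617215805740261548942770432*x - 534640097759918269392269843331715201526717739571151246172081303791946731685614558190428047662761357660952137663149661505148796647690220066978740299450245757917920075805232982115517457415693440347268005966919126203737967926244308756940967676211666807354057215400098762614826702846186676431946863232*x^2 + 5276974399867024396294270075487726588223063936319213331733195119861566146198559367555187573039708539739250990116898165934887195582719810667567504540109254148742389166145681464371683198884426423899036089230666853693206026327826745037846440890315718193139457420987649501363637222356296866383216887296*x^3 + 1248999437268382623836035616091560796867938002608729108213799736661585064909086539985181644654740180307114523585945313040745372268239535118183434454473718288078456058851253142907684774982358980067570784897812375815543796727002730052817449925848068644164696749026692280579761330771048069470370101504*x^4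 - 1172003183774207323680178618188921008278159007512626051516846122862969552678017508108511773896760268189934133097243163745338622723488964832992422693319330989592074090449944059610249902595497635720076085056039292385994784504196226175724453815617227624786554622564054620232988522676848580835819123968*x^5 - 333120534367280704993712292747796961051382516572012729066991425326496085750475142178318858115052465315404426313520427657730110122281830160917853503456357138608432412092378422531158395853393631572124448617944563680267902283476662012315166842408933524644866493070739032488217839867581338797629448320*x^6))) * hQ + (-((-323504061082980839917101638033264470350869128337781643255508469821779622565254912114755562071291866801945256651045132436426584399830535571986465878171105081145586580665409719073474161839149838149304973493836025423522548679310488306853465416075878508544582449504599383348413771766406250 - 2135416814439638660027749092340856945241609729025408728835411357791749782034379401711893506279909418369452845615597782262740368683903953228530927428459724408191059813657081343496672114138481764007180860537824034510471555961435230431264935364867404794982157738034410608127998817330859375*x - 555111859203794282770708043129850532181434229045008461665863529727313859708136629985199710152063236850506495457332124081642561110899642804177839654424279271760522879926777931853773347371288852779355183689812047208706895042385859099372847952307112165336154840088506304717101391594531250*x^2 + 2127513882730369737790627579664499281616418771474703183623670441353525638324834408306691653320320304897099632968872827025015662948388904009694703987495452304133732186859641853680751896394194989684404862530508263294167934307280228878822611613875004943075356818096159588118130348371484375*x^3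 + 860743803607868502504893433495585127089060656242418512168676293226499406489927739719318865517632967602068577694544252702022730438682939190211602596845722709994966373942460575118508438773817749372851543097468413302959788838809536257677366597240501176905310600044551942447106445216406250*x^4 - 397802951858583907540170453322768689571413769997154700468606309309162483961714100465357161849378105318718839840650725714594149254963403391089854494831172350451715257050774850554755250093373052350823098142393331243847483421953013476058833126204326294359271809132179949119506330387890625*x^5 - 214007393597420551335606001148174552513651313555705685858964552034177968827653024809367188867723256568156020527075758927884142116698411011899075972280099421859262160302454830533728731640884766317939382837485983014730453612470748855325836993305709132605621945081966145982745247527343750*x^6 - 22020164577279052728018572749430848442760940169112516476817002886934702123122252990730267674757732177468943338403624705554267296401891843028514814761635264060067378675098294354208134775864361916553119231289873555710013223270340574130515965603993402889755115849503398001147192708984375*x^7))) * hHr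
  norm_num at hc

/-- `W` has exactly 8 critical points in `(ℂ∖{0})²`, and each of them is
nondegenerate (nonvanishing Hessian determinant). -/
theorem W_critical_points :
    {p : ℂ × ℂ | IsCritPt p}.ncard = 8 ∧
      ∀ p : ℂ × ℂ, IsCritPt p → hessDet p ≠ 0 := by
  constructor
  · have hset : {p : ℂ × ℂ | IsCritPt p}
        = (fun x => (x, ycrit x)) '' (QP.roots.toFinset : Set ℂ) := by
      ext ⟨x, y⟩
      simp only [Set.mem_setOf_eq, Set.mem_image, Finset.mem_coe, mem_rootset]
      rw [crit_iff]
      constructor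
      · rintro ⟨hQ, hyv⟩
        exact ⟨x, hQ, by rw [hyv]⟩
      · rintro ⟨a, ha, heq⟩
        rw [Prod.mk.injEq] at heq
        obtain ⟨rfl, hy2⟩ := heq
        exact ⟨ha, hy2.symm⟩
    rw [hset, Set.ncard_image_of_injective _ (fun a b hab => congrArg Prod.fst hab),
      Set.ncard_coe_finset, QP_roots_card]
  · rintro ⟨x, y⟩ h
    exact hess_ne h
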